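/- Let μ, C, R_s > 0 and fix R_f ≥ 0, with C/μ < R_s (Naor's condition). Define for ξ > 0 with C/ξ - μR_s/ξ ≤ R_f < C/ξ the quantity n_e(ξ) = ln K(ξ)/ln S(ξ) - 1, where K(ξ) = (C/ξ - R_f)/(R_s - R_f + C/ξ) and S(ξ) = μ/(μ+ξ). Then lim_{ξ→0⁺} (ln K(ξ)/ln S(ξ)) = μR_s/C, i.e., as the catastrophe rate vanishes, the threshold converges to Naor's threshold μR_s/C - 1 (before taking floors). -/

import Mathlib

open Filter Topology

theorem naor_limit (μ C Rs Rf : ℝ) (hμ : 0 < μ) (hC : 0 < C) (hRs : 0 < Rs)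
    (hRf : 0 ≤ Rf) (hNaor : C / μ < Rs) :
    Tendsto (fun ξ : ℝ =>
        Real.log ((C / ξ - Rf) / (Rs - Rf + C / ξ)) / Real.log (μ / (μ + ξ)))
      (nhdsWithin 0 (Set.Ioi 0)) (nhds (μ * Rs / C)) := by
  set f : ℝ → ℝ := fun ξ => Real.log (C - Rf * ξ) - Real.log (C + (Rs - Rf) * ξ) with hf_def
  set g : ℝ → ℝ := fun ξ => Real.log μ - Real.log (μ + ξ) with hg_def
  -- derivative of f at 0 is -Rs/C
  have hf1 : HasDerivAt (fun ξ : ℝ => C - Rf * ξ) (-Rf) 0 := by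
    simpa using ((hasDerivAt_id (0:ℝ)).const_mul Rf).const_sub C
  have hf2 : HasDerivAt (fun ξ : ℝ => C + (Rs - Rf) * ξ) (Rs - Rf) 0 := by
    simpa using ((hasDerivAt_id (0:ℝ)).const_mul (Rs - Rf)).const_add C
  have hCne : C ≠ 0 := hC.ne'
  have hμne : μ ≠ 0 := hμ.ne'
  have hf1' : (fun ξ : ℝ => C - Rf * ξ) 0 ≠ 0 := by simpa using hCne
  have hf2' : (fun ξ : ℝ => C + (Rs - Rf) * ξ) 0 ≠ 0 := by simpa using hCne
  have hfD : HasDerivAt f (-Rs / C) 0 := by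
    have := (hf1.log hf1').sub (hf2.log hf2')
    refine this.congr_deriv ?_
    simp only [mul_zero, sub_zero, add_zero]
    field_simp
    ring
  have hg1 : HasDerivAt (fun ξ : ℝ => μ + ξ) 1 0 := by
    simpa using (hasDerivAt_id (0:ℝ)).const_add μ
  have hg1' : (fun ξ : ℝ => μ + ξ) 0 ≠ 0 := by simpa using hμne
  have hgD : HasDerivAt g (-(1 / μ)) 0 := by
    have := (hasDerivAt_const (0:ℝ) (Real.log μ)).sub (hg1.log hg1')
    simp only [hg_def]
    refine this.congr_deriv ?_
    simp
  have hf0 : f 0 = 0 := by simp [hf_def]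
  have hg0 : g 0 = 0 := by simp [hg_def]
  -- slopes tend to derivatives
  have hfs : Tendsto (fun ξ => f ξ / ξ) (𝓝[>] (0:ℝ)) (𝓝 (-Rs / C)) := by
    have h := hasDerivAt_iff_tendsto_slope.mp hfD
    have h' := h.mono_left (nhdsWithin_mono 0 (by intro x hx; exact ne_of_gt hx))
    refine h'.congr (fun ξ => ?_)
    simp [slope_fun_def, hf0]
    ring
  have hgs : Tendsto (fun ξ => g ξ / ξ) (𝓝[>] (0:ℝ)) (𝓝 (-(1 / μ))) := by
    have h := hasDerivAt_iff_tendsto_slope.mp hgD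
    have h' := h.mono_left (nhdsWithin_mono 0 (by intro x hx; exact ne_of_gt hx))
    refine h'.congr (fun ξ => ?_)
    simp [slope_fun_def, hg0]
    ring
  have hratio : Tendsto (fun ξ => (f ξ / ξ) / (g ξ / ξ)) (𝓝[>] (0:ℝ))
      (𝓝 (μ * Rs / C)) := by
    have hne : -(1 / μ) ≠ 0 := by
      simp [hμne]
    have := hfs.div hgs hne
    convert this using 2
    · simp only [Pi.div_apply]
    · field_simp
  refine hratio.congr' ?_
  -- eventual equality on a small right neighborhood of 0
  have hδ : (0:ℝ) < C / (Rf + |Rs - Rf| + 1) := by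
    apply div_pos hC
    have := abs_nonneg (Rs - Rf)
    linarith
  filter_upwards [Ioo_mem_nhdsGT_of_mem (by constructor <;> [rfl; exact hδ] :
      (0:ℝ) ∈ Set.Ico 0 (C / (Rf + |Rs - Rf| + 1)))] with ξ hξ
  obtain ⟨hξ0, hξδ⟩ := hξ
  have hξne : ξ ≠ 0 := ne_of_gt hξ0
  have hsum : (0:ℝ) < Rf + |Rs - Rf| + 1 := by
    have := abs_nonneg (Rs - Rf); linarith
  have hbound : (Rf + |Rs - Rf| + 1) * ξ < C := by
    have := (lt_div_iff₀' hsum).mp hξδ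
    linarith
  have h1 : 0 < C - Rf * ξ := by
    nlinarith [abs_nonneg (Rs - Rf)]
  have h2 : 0 < C + (Rs - Rf) * ξ := by
    have habs : -(Rs - Rf) ≤ |Rs - Rf| := neg_le_abs _
    nlinarith
  have hμξ : 0 < μ + ξ := by linarith
  have hgne : g ξ ≠ 0 := by
    have : Real.log μ < Real.log (μ + ξ) :=
      Real.log_lt_log hμ (by linarith)
    simp only [hg_def]
    linarith
  have harg : (C / ξ - Rf) / (Rs - Rf + C / ξ) = (C - Rf * ξ) / (C + (Rs - Rf) * ξ) := by
    rw [div_eq_div_iff]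
    · field_simp
      ring
    · have : Rs - Rf + C / ξ = (C + (Rs - Rf) * ξ) / ξ := by field_simp; ring
      rw [this]
      exact ne_of_gt (div_pos h2 hξ0)
    · exact h2.ne'
  have hlogf : Real.log ((C / ξ - Rf) / (Rs - Rf + C / ξ)) = f ξ := by
    rw [harg, Real.log_div h1.ne' h2.ne', hf_def]
  have hlogg : Real.log (μ / (μ + ξ)) = g ξ := by
    rw [Real.log_div hμne hμξ.ne', hg_def]
  rw [hlogf, hlogg]
  field_simp
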